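/- Assume C_2 > 0 and let L = lim_{n→∞} (1/n^d) · log C_n. Then the sequence of lower bounds converges to L: lim_{n→∞} (1/n^d) · (log C_{n+1} − q_d(n) · log |Σ|) = L, where q_d(n) = (2^d − 1) · Σ_{k=0}^{d−1} (binom(d,k)/(2^d − 2^k)) · n^k. In particular, L is the limit of a nondecreasing-in-doubling, explicitly computable sequence of lower bounds together with the upper bounds (1/n^d) · log C_n. -/

import Mathlib

/-- A pattern `P` on the cube `[1,n]^d` (coordinates encoded by `Fin n`, where
`j : Fin n` represents the coordinate `j+1 ∈ [1,n]`) is locally admissible if no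
two adjacent values form a forbidden pair. -/
def IsLocAdm {A : Type*} (d n : ℕ) (F : Fin d → Set (A × A))
    (P : (Fin d → Fin n) → A) : Prop :=
  ∀ (x : Fin d → Fin n) (k : Fin d) (h : (x k : ℕ) + 1 < n),
    (P x, P (Function.update x k ⟨(x k : ℕ) + 1, h⟩)) ∉ F k

/-- `patCount d F n` is `C_n`, the number of locally admissible patterns on `[1,n]^d`. -/
noncomputable def patCount {A : Type*} [Fintype A] (d : ℕ) (F : Fin d → Set (A × A))
    (n : ℕ) : ℕ :=
  Nat.card {P : (Fin d → Fin n) → A // IsLocAdm d n F P}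

/-- A configuration `x : ℤ^d → A` is globally admissible if no two adjacent values
form a forbidden pair. -/
def IsGlobAdm {A : Type*} (d : ℕ) (F : Fin d → Set (A × A))
    (x : (Fin d → ℤ) → A) : Prop :=
  ∀ (v : Fin d → ℤ) (k : Fin d),
    (x v, x (Function.update v k (v k + 1))) ∉ F k

/-- The polynomial `q_d(m) = (2^d − 1) · Σ_{k=0}^{d−1} (binom(d,k)/(2^d − 2^k)) · m^k`,
as a real function. -/
noncomputable def qReal (d : ℕ) (m : ℝ) : ℝ :=
  (2 ^ d - 1) * ∑ k ∈ Finset.range d, (d.choose k : ℝ) / (2 ^ d - 2 ^ k) * m ^ k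


open Filter in
/-- if `C_2 > 0` and `L = lim (1/n^d) log C_n`, then the explicit lower
bounds `(1/n^d)(log C_{n+1} − q_d(n) log |Σ|)` also converge to `L`. -/
theorem lower_bounds_tendsto_entropy
    {A : Type*} [Fintype A] [Nonempty A]
    (d : ℕ) (hd : 1 ≤ d) (F : Fin d → Set (A × A))
    (hF : ∀ (i : Fin d) (a b : A), (a, b) ∈ F i ↔ (b, a) ∈ F i)
    (h2 : 0 < patCount d F 2) (L : ℝ)
    (hL : Tendsto (fun n : ℕ => (1 / (n : ℝ) ^ d) * Real.log (patCount d F n)) atTop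
      (nhds L)) :
    Tendsto (fun n : ℕ => (1 / (n : ℝ) ^ d) *
        (Real.log (patCount d F (n + 1)) - qReal d n * Real.log (Fintype.card A)))
      atTop (nhds L) := by

  -- First term: (1/n^d) * log C_{n+1} → L
  have h1 : Tendsto (fun n : ℕ => (1 / (n : ℝ) ^ d) * Real.log (patCount d F (n + 1)))
      atTop (nhds L) := by
    have ha : Tendsto (fun n : ℕ =>
        (1 / ((n + 1 : ℕ) : ℝ) ^ d) * Real.log (patCount d F (n + 1))) atTop (nhds L) :=
      hL.comp (tendsto_add_atTop_nat 1)
    have hb : Tendsto (fun n : ℕ => ((1 : ℝ) + 1 / (n : ℝ)) ^ d) atTop (nhds 1) := by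
      have := ((tendsto_const_nhds (x := (1 : ℝ))).add tendsto_one_div_atTop_nhds_zero_nat).pow d
      simpa using this
    have hmul := hb.mul ha
    rw [one_mul] at hmul
    refine hmul.congr' ?_
    filter_upwards [Filter.eventually_gt_atTop 0] with n hn
    have hn' : (n : ℝ) ≠ 0 := Nat.cast_ne_zero.mpr hn.ne'
    have hn1 : ((n : ℝ) + 1) ≠ 0 := by positivity
    push_cast
    rw [one_add_div hn', div_pow]
    field_simp
  -- Second term: (1/n^d) * (q_d(n) * log |A|) → 0
  have h2 : Tendsto (fun n : ℕ =>
      (1 / (n : ℝ) ^ d) * (qReal d n * Real.log (Fintype.card A))) atTop (nhds 0) := by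
    have key : ∀ k ∈ Finset.range d, Tendsto (fun n : ℕ =>
        ((2 : ℝ) ^ d - 1) * ((d.choose k : ℝ) / (2 ^ d - 2 ^ k)) *
          Real.log (Fintype.card A) * ((n : ℝ) ^ k / (n : ℝ) ^ d)) atTop (nhds 0) := by
      intro k hk
      have hkd : k < d := Finset.mem_range.mp hk
      have hz : Tendsto (fun x : ℝ => x ^ k / x ^ d) atTop (nhds 0) :=
        tendsto_pow_div_pow_atTop_zero hkd
      have := (hz.comp tendsto_natCast_atTop_atTop).const_mul
        (((2 : ℝ) ^ d - 1) * ((d.choose k : ℝ) / (2 ^ d - 2 ^ k)) * Real.log (Fintype.card A))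
      simpa using this
    have hsum := tendsto_finset_sum (Finset.range d) key
    rw [Finset.sum_const_zero] at hsum
    refine hsum.congr fun n => ?_
    simp only [qReal, Finset.mul_sum, Finset.sum_mul]
    refine Finset.sum_congr rfl fun k _ => by ring
  have hfin := h1.sub h2
  rw [sub_zero] at hfin
  refine hfin.congr fun n => ?_
  ring
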